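/- arXiv:2311.08237 — 2 statements merged into one kernel-verified Lean document; each statement's English description precedes it below -/
import Mathlib

section
/- The quadratic Hilbert symbol at 2: for distinct odd primes p and q, the equation p·X² + q·Y² = Z² has a solution (x,y,z) ≠ (0,0,0) with x, y, z ∈ ℚ_2 if and only if p ≡ 1 (mod 4) or q ≡ 1 (mod 4); that is, (p,q)_2 = (−1)^{((p−1)/2)·((q−1)/2)}. -/
open PadicInt Polynomial

-- square roots of naturals ≡ 1 mod 8 in ℚ_2, via Hensel
lemma sqrt_of_mod8 (n : ℕ) (h8 : n % 8 = 1) : ∃ z : ℚ_[2], z ^ 2 = (n : ℚ_[2]) := by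
  obtain ⟨k, hk⟩ : ∃ k, n = 8 * k + 1 := ⟨n / 8, by omega⟩
  have h2 : ‖(2 : ℤ_[2])‖ = 2⁻¹ := by simpa using PadicInt.norm_p (p := 2)
  have key : ∃ z : ℤ_[2], z ^ 2 = (n : ℤ_[2]) := by
    have hF := hensels_lemma (p := 2) (F := X ^ 2 - C (n : ℤ_[2])) (a := 1) ?_
    · obtain ⟨z, hz, -⟩ := hF
      refine ⟨z, ?_⟩
      rw [coe_aeval_eq_eval] at hz
      simp only [eval_sub, eval_pow, eval_X, eval_C, sub_eq_zero] at hz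
      exact hz
    · have heval : (X ^ 2 - C (n : ℤ_[2])).eval 1 = -((2:ℤ_[2])^3 * k) := by
        simp only [eval_sub, eval_pow, eval_X, eval_C, one_pow, hk]
        push_cast; ring
      have hderiv : (X ^ 2 - C (n : ℤ_[2])).derivative.eval 1 = 2 := by
        simp [derivative_pow]
      rw [coe_aeval_eq_eval]
      rw [heval, hderiv, norm_neg, norm_mul, norm_pow, h2]
      calc (2:ℝ)⁻¹ ^ 3 * ‖(k : ℤ_[2])‖ ≤ (2:ℝ)⁻¹ ^ 3 * 1 := by
            gcongr; exact PadicInt.norm_le_one _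
        _ < (2⁻¹ : ℝ) ^ 2 := by norm_num
  obtain ⟨z, hz⟩ := key
  exact ⟨(z : ℚ_[2]), by exact_mod_cast congrArg (PadicInt.Coe.ringHom (p := 2)) hz⟩

-- units of ZMod 4 square to 1
lemma unit_sq (W : ℤ_[2]) (hW : ¬ ((2 : ℤ_[2]) ∣ W)) : (toZModPow 2 W : ZMod (2 ^ 2)) ^ 2 = 1 := by
  set a := (toZModPow 2 W : ZMod (2 ^ 2)) with ha
  have hdvd : ¬ ((2 : ZMod (2 ^ 2)) ∣ a) := by
    rintro ⟨c, hc⟩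
    apply hW
    have hsurj : ∃ m : ℕ, (toZModPow 2 ((m : ℤ_[2])) : ZMod (2^2)) = c := by
      refine ⟨c.val, ?_⟩
      rw [map_natCast]
      simp [ZMod.natCast_val, ZMod.cast_id]
    obtain ⟨m, hm⟩ := hsurj
    have hker : W - 2 * (m : ℤ_[2]) ∈ RingHom.ker (toZModPow (p := 2) 2) := by
      rw [RingHom.mem_ker, map_sub, map_mul, hm, map_ofNat, ← hc, sub_self]
    rw [ker_toZModPow, Ideal.mem_span_singleton] at hker
    obtain ⟨t, ht⟩ := hker
    have : W = 2 * ((m : ℤ_[2]) + 2 * t) := by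
      have h4 : ((2:ℕ):ℤ_[2])^2 = 2 * 2 := by norm_num
      rw [h4] at ht
      linear_combination ht
    exact ⟨_, this⟩
  have hgen : ∀ b : ZMod (2 ^ 2), b ≠ 0 → b ≠ 2 → b ^ 2 = 1 := by decide
  exact hgen a (fun h => hdvd ⟨0, by rw [h]; ring⟩) (fun h => hdvd ⟨1, by rw [h]; ring⟩)

lemma no_sol_aux (p q : ℕ) (hp3 : p % 4 = 3) (hq3 : q % 4 = 3)
    (x y z : ℚ_[2]) (hx : ‖x‖ ≤ 1) (hy : ‖y‖ ≤ 1) (hz : ‖z‖ ≤ 1)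
    (hone : ‖x‖ = 1 ∨ ‖y‖ = 1 ∨ ‖z‖ = 1)
    (heq : (p : ℚ_[2]) * x ^ 2 + (q : ℚ_[2]) * y ^ 2 = z ^ 2) : False := by
  set X : ℤ_[2] := ⟨x, hx⟩ with hX
  set Y : ℤ_[2] := ⟨y, hy⟩ with hY
  set Z : ℤ_[2] := ⟨z, hz⟩ with hZ
  have heqZ : (p : ℤ_[2]) * X ^ 2 + (q : ℤ_[2]) * Y ^ 2 = Z ^ 2 := by
    apply Subtype.ext
    push_cast
    exact heq
  set φ := (toZModPow (p := 2) 2) with hφ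
  have him : (p : ZMod (2 ^ 2)) * (φ X) ^ 2 + (q : ZMod (2 ^ 2)) * (φ Y) ^ 2 = (φ Z) ^ 2 := by
    have := congrArg φ heqZ
    simpa [map_add, map_mul, map_pow, map_natCast] using this
  have hcast : ∀ m : ℕ, m % 4 = 3 → (m : ZMod (2 ^ 2)) = 3 := by
    intro m hm
    rw [← ZMod.natCast_mod m (2 ^ 2)]
    norm_num [hm]
  rw [hcast p hp3, hcast q hq3] at him
  have hunit : (φ X) ^ 2 = 1 ∨ (φ Y) ^ 2 = 1 ∨ (φ Z) ^ 2 = 1 := by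
    have key : ∀ (w : ℚ_[2]) (hw : ‖w‖ ≤ 1), ‖w‖ = 1 → (φ ⟨w, hw⟩) ^ 2 = 1 := by
      intro w hw h1
      apply unit_sq
      intro hdvd
      have h2 : ((2 : ℕ) : ℤ_[2]) ∣ (⟨w, hw⟩ : ℤ_[2]) := by exact_mod_cast hdvd
      have h3 := (PadicInt.norm_lt_one_iff_dvd _).mpr h2
      have h4 : ‖w‖ < 1 := by simpa [PadicInt.norm_def] using h3
      rw [h1] at h4
      exact lt_irrefl 1 h4
    rcases hone with h | h | h
    · exact Or.inl (key x hx h)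
    · exact Or.inr (Or.inl (key y hy h))
    · exact Or.inr (Or.inr (key z hz h))
  have hfin : ∀ a b c : ZMod (2 ^ 2), 3 * a ^ 2 + 3 * b ^ 2 = c ^ 2 →
      a ^ 2 ≠ 1 ∧ b ^ 2 ≠ 1 ∧ c ^ 2 ≠ 1 := by decide
  obtain ⟨h1, h2, h3⟩ := hfin _ _ _ him
  rcases hunit with h | h | h
  · exact h1 h
  · exact h2 h
  · exact h3 h


lemma sol_aux (p q : ℕ) (hp1 : p % 4 = 1) (hq : q % 2 = 1) :
    ∃ x y z : ℚ_[2], (x, y, z) ≠ (0, 0, 0) ∧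
      (p : ℚ_[2]) * x ^ 2 + (q : ℚ_[2]) * y ^ 2 = z ^ 2 := by
  rcases (by omega : p % 8 = 1 ∨ p % 8 = 5) with h | h
  · obtain ⟨z, hz⟩ := sqrt_of_mod8 p h
    exact ⟨1, 0, z, by simp, by rw [hz]; ring⟩
  · obtain ⟨z, hz⟩ := sqrt_of_mod8 (p + 4 * q) (by omega)
    refine ⟨1, 2, z, by simp, ?_⟩
    rw [hz]; push_cast; ring

/-- **The quadratic Hilbert symbol at 2**: for distinct odd primes `p` and `q`, the equation
`p·X² + q·Y² = Z²` has a nontrivial solution in `ℚ_2` iff `p ≡ 1 (mod 4)` or `q ≡ 1 (mod 4)`;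
that is, `(p,q)_2 = (-1)^(((p-1)/2)·((q-1)/2))`. -/
theorem hilbert_symbol_at_two (p q : ℕ) (hp : p.Prime) (hq : q.Prime)
    (hp2 : p ≠ 2) (hq2 : q ≠ 2) (hpq : p ≠ q) :
    (∃ x y z : ℚ_[2], (x, y, z) ≠ (0, 0, 0) ∧
        (p : ℚ_[2]) * x ^ 2 + (q : ℚ_[2]) * y ^ 2 = z ^ 2) ↔
      (p % 4 = 1 ∨ q % 4 = 1) := by
  have hpodd : p % 2 = 1 := Nat.odd_iff.mp (hp.odd_of_ne_two hp2)
  have hqodd : q % 2 = 1 := Nat.odd_iff.mp (hq.odd_of_ne_two hq2)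
  constructor
  · rintro ⟨x, y, z, hne, heq⟩
    by_contra hcon
    push_neg at hcon
    obtain ⟨hp4, hq4⟩ := hcon
    have hp3 : p % 4 = 3 := by omega
    have hq3 : q % 4 = 3 := by omega
    have hnz : x ≠ 0 ∨ y ≠ 0 ∨ z ≠ 0 := by
      by_contra h
      push_neg at h
      exact hne (by simp [h.1, h.2.1, h.2.2])
    obtain ⟨w, hwx, hwy, hwz, hwe⟩ :
        ∃ w : ℚ_[2], ‖x‖ ≤ ‖w‖ ∧ ‖y‖ ≤ ‖w‖ ∧ ‖z‖ ≤ ‖w‖ ∧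
          (‖x‖ = ‖w‖ ∨ ‖y‖ = ‖w‖ ∨ ‖z‖ = ‖w‖) := by
      rcases le_total ‖x‖ ‖y‖ with h1 | h1 <;> rcases le_total ‖y‖ ‖z‖ with h2 | h2 <;>
        rcases le_total ‖x‖ ‖z‖ with h3 | h3
      · exact ⟨z, h3, h2, le_refl _, Or.inr (Or.inr rfl)⟩
      · exact ⟨z, h1.trans h2, h2, le_refl _, Or.inr (Or.inr rfl)⟩
      · exact ⟨y, h1, le_refl _, h2, Or.inr (Or.inl rfl)⟩
      · exact ⟨y, h1, le_refl _, h2, Or.inr (Or.inl rfl)⟩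
      · exact ⟨z, h3, h2, le_refl _, Or.inr (Or.inr rfl)⟩
      · exact ⟨x, le_refl _, h1, h3, Or.inl rfl⟩
      · exact ⟨x, le_refl _, h1, le_antisymm h3 (h2.trans h1) ▸ h3, Or.inl rfl⟩
      · exact ⟨x, le_refl _, h1, h3, Or.inl rfl⟩
    have hw0 : w ≠ 0 := by
      rintro rfl
      simp only [norm_zero, norm_le_zero_iff] at hwx hwy hwz
      rcases hnz with h | h | h
      · exact h hwx
      · exact h hwy
      · exact h hwz
    have hwpos : 0 < ‖w‖ := norm_pos_iff.mpr hw0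
    have hwne : ‖w‖ ≠ 0 := ne_of_gt hwpos
    have hb : ∀ u : ℚ_[2], ‖u‖ ≤ ‖w‖ → ‖w⁻¹ * u‖ ≤ 1 := by
      intro u hu
      rw [_root_.norm_mul, norm_inv]
      calc ‖w‖⁻¹ * ‖u‖ ≤ ‖w‖⁻¹ * ‖w‖ := by gcongr
        _ = 1 := inv_mul_cancel₀ hwne
    have he : ∀ u : ℚ_[2], ‖u‖ = ‖w‖ → ‖w⁻¹ * u‖ = 1 := by
      intro u hu
      rw [_root_.norm_mul, norm_inv, hu, inv_mul_cancel₀ hwne]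
    refine no_sol_aux p q hp3 hq3 (w⁻¹ * x) (w⁻¹ * y) (w⁻¹ * z)
      (hb x hwx) (hb y hwy) (hb z hwz) ?_ (by linear_combination w⁻¹ ^ 2 * heq)
    rcases hwe with h | h | h
    · exact Or.inl (he x h)
    · exact Or.inr (Or.inl (he y h))
    · exact Or.inr (Or.inr (he z h))
  · rintro (h | h)
    · exact sol_aux p q h hqodd
    · obtain ⟨x, y, z, hne, heq⟩ := sol_aux q p h hpodd
      refine ⟨y, x, z, ?_, by linear_combination heq⟩
      simp only [ne_eq, Prod.mk.injEq] at hne ⊢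
      tauto
end

section
/- Logarithmic-derivative identity with Bernoulli numbers (Kummer/Coates–Wiles computation): let a, b be rational numbers and work in the ring ℚ⟦z⟧ of formal power series over ℚ. Set S_c := exp(c·z/2) − exp(−c·z/2) for c ∈ ℚ, and let G ∈ ℚ⟦z⟧ be the series whose coefficient of z^{k−1} is (B_k/k!)·(a^k − b^k) for k ≥ 2 and whose other coefficients are 0, where B_k denotes the k-th Bernoulli number. Then S_a′·S_b − S_a·S_b′ = G·S_a·S_b, where ′ denotes the formal derivative; equivalently, the logarithmic derivative of F = S_a/S_b equals Σ_{k ≥ 2 even} (B_k/k!)·(a^k − b^k)·z^{k−1} (the terms with odd k ≥ 3 vanish since B_k = 0 for odd k ≥ 3). -/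
open PowerSeries

noncomputable def Ssin (c : ℚ) : PowerSeries ℚ :=
  rescale (c / 2) (exp ℚ) - rescale (-(c / 2)) (exp ℚ)

noncomputable def bernoulliLogDerivSeries (a b : ℚ) : PowerSeries ℚ :=
  PowerSeries.mk fun n =>
    if n = 0 then 0 else (bernoulli (n + 1) / (n + 1).factorial) * (a ^ (n + 1) - b ^ (n + 1))

lemma derivative_rescale_exp (c : ℚ) :
    (d⁄dX ℚ) (rescale c (exp ℚ)) = C c * rescale c (exp ℚ) := by
  ext n
  rw [coeff_derivative, coeff_C_mul, coeff_rescale, coeff_rescale, coeff_exp, coeff_exp]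
  simp only [Algebra.algebraMap_self_apply, Nat.factorial_succ]
  have h1 : ((n : ℚ) + 1) ≠ 0 := by positivity
  have h2 : (n.factorial : ℚ) ≠ 0 := by exact_mod_cast n.factorial_ne_zero
  push_cast
  field_simp
  ring

lemma Ssin_eq (c : ℚ) :
    Ssin c = rescale (-(c/2)) (exp ℚ) * (rescale c (exp ℚ) - 1) := by
  rw [Ssin, mul_sub, mul_one, exp_mul_exp_eq_exp_add]
  ring_nf

lemma rescale_bern (c : ℚ) :
    rescale c (bernoulliPowerSeries ℚ) * (rescale c (exp ℚ) - 1) = C c * X := by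
  have := congrArg (rescale c) (bernoulliPowerSeries_mul_exp_sub_one ℚ)
  rw [map_mul, map_sub, map_one, rescale_X] at this
  exact this

lemma X_deriv_Ssin (c : ℚ) :
    X * (d⁄dX ℚ) (Ssin c)
      = (rescale c (bernoulliPowerSeries ℚ) + C (c/2) * X) * Ssin c := by
  have h1 : (d⁄dX ℚ) (Ssin c)
      = C (c/2) * rescale (c/2) (exp ℚ) + C (c/2) * rescale (-(c/2)) (exp ℚ) := by
    rw [Ssin, map_sub, derivative_rescale_exp, derivative_rescale_exp, map_neg]
    ring
  have h2 := Ssin_eq c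
  have h3 := rescale_bern c
  have : (rescale c (bernoulliPowerSeries ℚ) + C (c/2) * X) * Ssin c
      = rescale (-(c/2)) (exp ℚ) * (rescale c (bernoulliPowerSeries ℚ) * (rescale c (exp ℚ) - 1))
        + C (c/2) * X * Ssin c := by
    rw [h2]; ring
  have hE : rescale (-(c/2)) (exp ℚ) * rescale c (exp ℚ) = rescale (c/2) (exp ℚ) := by
    rw [exp_mul_exp_eq_exp_add]; ring_nf
  have hC : C c = 2 * C (c/2) := by
    rw [← map_ofNat (C (R := ℚ)) 2, ← map_mul]; ring_nf
  rw [this, h3, h1, h2]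
  linear_combination (-X * C (c/2)) * hE - X * rescale (-(c/2)) (exp ℚ) * hC

/-- **Logarithmic-derivative identity with Bernoulli numbers** (Kummer/Coates–Wiles):
`S_a′·S_b − S_a·S_b′ = G·S_a·S_b`, i.e. the logarithmic derivative of `F = S_a/S_b` equals
`Σ_{k ≥ 2} (B_k/k!)·(a^k − b^k)·z^(k−1)`. -/
theorem log_deriv_bernoulli_identity (a b : ℚ) :
    (d⁄dX ℚ) (Ssin a) * Ssin b - Ssin a * (d⁄dX ℚ) (Ssin b)
      = bernoulliLogDerivSeries a b * Ssin a * Ssin b := by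
  have hX : (X : PowerSeries ℚ) ≠ 0 := X_ne_zero
  apply mul_left_cancel₀ hX
  have key : (rescale a (bernoulliPowerSeries ℚ) + C (a/2) * X)
      - (rescale b (bernoulliPowerSeries ℚ) + C (b/2) * X)
      = X * bernoulliLogDerivSeries a b := by
    ext n
    rw [map_sub, map_add, map_add, coeff_C_mul, coeff_C_mul, coeff_rescale, coeff_rescale]
    match n with
    | 0 => simp [bernoulliPowerSeries, bernoulliLogDerivSeries]
    | 1 =>
      simp [bernoulliPowerSeries, bernoulliLogDerivSeries, coeff_succ_X_mul, bernoulli_one]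
      ring
    | (n+2) =>
      simp [bernoulliPowerSeries, bernoulliLogDerivSeries, coeff_succ_X_mul, coeff_X]
      ring
  calc X * ((d⁄dX ℚ) (Ssin a) * Ssin b - Ssin a * (d⁄dX ℚ) (Ssin b))
      = (X * (d⁄dX ℚ) (Ssin a)) * Ssin b - Ssin a * (X * (d⁄dX ℚ) (Ssin b)) := by ring
    _ = ((rescale a (bernoulliPowerSeries ℚ) + C (a/2) * X)
          - (rescale b (bernoulliPowerSeries ℚ) + C (b/2) * X)) * (Ssin a * Ssin b) := by
        rw [X_deriv_Ssin, X_deriv_Ssin]; ring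
    _ = X * (bernoulliLogDerivSeries a b * Ssin a * Ssin b) := by rw [key]; ring
end
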